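/- arXiv:1605.09784 — 2 statements merged into one kernel-verified Lean document; each statement's English description precedes it below -/
import Mathlib

section
/- Let S be a finite nonempty set of points in Euclidean space ℝ^d with M = max_{p ∈ S} ‖p‖ > 0. Let ε be a real number with 0 < ε < 1 and set δ = ε/15. Let q ∈ ℝ^d be a query point with ‖q‖ ≥ (1/3)·M, let p_fn ∈ S satisfy ‖p_fn‖ < δ·M, and let p_sh ∈ S (the shrug point) satisfy ‖p_sh‖ ≤ δ·M. Then d(q, p_sh) > 0 and d(q, p_fn) / d(q, p_sh) < 1 + ε. -/
theorem shrug_point_eps_approx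
    (d : ℕ) (S : Finset (EuclideanSpace ℝ (Fin d))) (hS : S.Nonempty)
    (M : ℝ) (hM : M = S.sup' hS (fun p => ‖p‖)) (hMpos : M > 0)
    (ε : ℝ) (hε0 : 0 < ε) (hε1 : ε < 1)
    (δ : ℝ) (hδ : δ = ε / 15)
    (q : EuclideanSpace ℝ (Fin d)) (hq : ‖q‖ ≥ (1 / 3) * M)
    (pfn : EuclideanSpace ℝ (Fin d)) (hpfnS : pfn ∈ S) (hpfn : ‖pfn‖ < δ * M)
    (psh : EuclideanSpace ℝ (Fin d)) (hpshS : psh ∈ S) (hpsh : ‖psh‖ ≤ δ * M) :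
    dist q psh > 0 ∧ dist q pfn / dist q psh < 1 + ε := by
  have h1 : ‖q‖ - ‖psh‖ ≤ dist q psh := by
    rw [dist_eq_norm]; exact norm_sub_norm_le _ _
  have h2 : dist q pfn ≤ ‖q‖ + ‖pfn‖ := by
    rw [dist_eq_norm]; exact norm_sub_le _ _
  have hb : 0 < dist q psh := by nlinarith
  refine ⟨hb, ?_⟩
  rw [div_lt_iff₀ hb]
  nlinarith [mul_pos hε0 hMpos, mul_pos hε0 (mul_pos hε0 hMpos)]
end

section
/- Let S be a finite nonempty set of points in Euclidean space ℝ^d with M = max_{p ∈ S} ‖p‖ > 0. Let ε be a real number with 0 < ε < 1 and set δ = ε/15. Let q ∈ ℝ^d be any query point and let p_fn ∈ S be a true furthest neighbor of q in S, i.e., d(q, p_fn) ≥ d(q, p) for all p ∈ S. If ‖p_fn‖ < δ·M, then ‖q‖ ≥ (1/3)·M, and for every point p_sh ∈ S with ‖p_sh‖ ≤ δ·M it holds that d(q, p_sh) > 0 and d(q, p_fn) / d(q, p_sh) < 1 + ε; that is, any such p_sh is an ε-approximate furthest neighbor of q. -/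
theorem guaranteed_drusilla_shrug_point
    (d : ℕ) (S : Finset (EuclideanSpace ℝ (Fin d))) (hS : S.Nonempty)
    (M : ℝ) (hM : M = S.sup' hS (fun p => ‖p‖)) (hMpos : M > 0)
    (ε : ℝ) (hε0 : 0 < ε) (hε1 : ε < 1)
    (δ : ℝ) (hδ : δ = ε / 15)
    (q : EuclideanSpace ℝ (Fin d))
    (pfn : EuclideanSpace ℝ (Fin d)) (hpfnS : pfn ∈ S)
    (hfar : ∀ p ∈ S, dist q p ≤ dist q pfn)
    (hpfn : ‖pfn‖ < δ * M) :
    ‖q‖ ≥ (1 / 3) * M ∧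
      ∀ psh ∈ S, ‖psh‖ ≤ δ * M →
        dist q psh > 0 ∧ dist q pfn / dist q psh < 1 + ε := by
  obtain ⟨pm, hpmS, hpmM⟩ := S.exists_mem_eq_sup' hS (fun p => ‖p‖)
  have hMpm : M = ‖pm‖ := by rw [hM, hpmM]
  have h1 : ‖pm‖ - ‖q‖ ≤ dist q pm := by
    have := norm_sub_norm_le pm q
    rw [dist_comm, dist_eq_norm]
    linarith
  have h2 : dist q pm ≤ dist q pfn := hfar pm hpmS
  have h3 : dist q pfn ≤ ‖q‖ + ‖pfn‖ := by
    calc dist q pfn ≤ dist q 0 + dist 0 pfn := dist_triangle _ _ _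
    _ = ‖q‖ + ‖pfn‖ := by rw [dist_zero_right, dist_zero_left]
  have hδpos : 0 < δ := by rw [hδ]; linarith
  have hδsmall : δ < 1/15 := by rw [hδ]; linarith
  -- ‖q‖ > (1-δ)M/2
  have hq : ‖q‖ > (1 - δ) * M / 2 := by
    have : M - ‖q‖ ≤ dist q pfn := by rw [hMpm]; linarith
    nlinarith [hδpos, hMpos]
  have hq3 : ‖q‖ ≥ (1/3) * M := by nlinarith
  refine ⟨hq3, fun psh hpshS hpsh => ?_⟩
  have h4 : ‖q‖ - ‖psh‖ ≤ dist q psh := by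
    have := norm_sub_norm_le q psh
    rw [dist_eq_norm]
    linarith
  have hdpos : dist q psh > 0 := by nlinarith
  constructor
  · exact hdpos
  · rw [div_lt_iff₀ hdpos]
    by_contra hcon2
    push_neg at hcon2
    have h5 : dist q pfn ≤ ‖q‖ + δ * M := by linarith
    have h6 : ‖q‖ - δ * M ≤ dist q psh := by linarith
    have hε15 : δ * 15 = ε := by rw [hδ]; ring
    have key : (1 + ε) * (‖q‖ - δ * M) ≤ dist q pfn → False := by
      intro h
      have e1 : ε * ‖q‖ > ε * ((1 - δ) * M / 2) := mul_lt_mul_of_pos_left hq hε0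
      rw [hδ] at *
      nlinarith [mul_pos hε0 hMpos, sq_nonneg ε, mul_nonneg (mul_nonneg hε0.le hε0.le) hMpos.le]
    exact key (le_trans (mul_le_mul_of_nonneg_left h6 (by linarith : (0:ℝ) ≤ 1 + ε)) hcon2)
end
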